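/- (Classical Spitzer identity) Let (A,P) be a complete filtered commutative Rota–Baxter algebra of weight 1. Then for any b ∈ A_1: exp(−P(log(1+b))) = Σ_{n≥0} (−1)^n P(P(···P(P(b)b)···b)b), the n-fold right-nested application; equivalently, x := exp(−P(log(1+b))) is the unique solution of x = 1 − P(xb). -/

import Mathlib

open scoped BigOperators

noncomputable def expS (K : Type*) {A : Type*} [Field K] [CharZero K] [Ring A] [Algebra K A]
    [UniformSpace A] (a : A) : A :=
  ∑' n : ℕ, ((n.factorial : K)⁻¹) • a ^ n

noncomputable def logS (K : Type*) {A : Type*} [Field K] [CharZero K] [Ring A] [Algebra K A]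
    [UniformSpace A] (a : A) : A :=
  ∑' n : ℕ, (((-1 : K) ^ n) * ((n : K) + 1)⁻¹) • (a - 1) ^ (n + 1)

noncomputable def BCHs (K : Type*) {A : Type*} [Field K] [CharZero K] [Ring A] [Algebra K A]
    [UniformSpace A] (x y : A) : A :=
  logS K (expS K x * expS K y) - x - y

/-- A complete decreasing multiplicative filtration defining the topology of `A`. -/
def IsCompleteFiltration (K : Type*) {A : Type*} [Field K] [CharZero K] [Ring A] [Algebra K A]
    [UniformSpace A] (F : ℕ → Submodule K A) : Prop :=
  F 0 = ⊤ ∧ (∀ n, F (n + 1) ≤ F n) ∧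
    (∀ m n : ℕ, ∀ x ∈ F m, ∀ y ∈ F n, x * y ∈ F (m + n)) ∧
    (∀ n, IsOpen ((F n : Set A))) ∧
    (∀ U ∈ nhds (0 : A), ∃ n, ((F n : Set A)) ⊆ U)

variable {K : Type*} [Field K] [CharZero K] {A : Type*} [CommRing A] [Algebra K A]
  [UniformSpace A] [CompleteSpace A] [T2Space A] [IsTopologicalRing A]
  [IsUniformAddGroup A]

def spitzerTerm (P : A → A) (b : A) : ℕ → A
  | 0 => 1
  | n + 1 => P (spitzerTerm P b n * b)


/-! ### Auxiliary material for the proof of Spitzer's identity -/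

section SpitzerAux

set_option linter.unusedSectionVars false
set_option linter.unusedVariables false

open PowerSeries Finset

/-! #### Topological infrastructure from the filtration -/

variable (F : ℕ → Submodule K A)

lemma F_antitone (hdec : ∀ n, F (n + 1) ≤ F n) : ∀ {m n : ℕ}, n ≤ m → F m ≤ F n :=
  fun {m n} h => antitone_nat_of_succ_le hdec h

lemma summable_of_finite_notMem {ι : Type*}
    (hbasis : ∀ U ∈ nhds (0 : A), ∃ n, ((F n : Set A)) ⊆ U)
    (u : ι → A) (h : ∀ N, {i | u i ∉ F N}.Finite) : Summable u := by
  rw [summable_iff_vanishing]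
  intro e he
  obtain ⟨N, hN⟩ := hbasis e he
  refine ⟨(h N).toFinset, fun t ht => hN ?_⟩
  refine Submodule.sum_mem _ fun i hi => ?_
  by_contra hmem
  exact (Finset.disjoint_left.mp ht hi) ((h N).mem_toFinset.mpr hmem)

lemma summable_of_mem_F
    (hdec : ∀ n, F (n + 1) ≤ F n)
    (hbasis : ∀ U ∈ nhds (0 : A), ∃ n, ((F n : Set A)) ⊆ U)
    (u : ℕ → A) (h : ∀ n, u n ∈ F n) : Summable u := by
  refine summable_of_finite_notMem F hbasis u fun N => Set.Finite.subset (Set.finite_Iio N) ?_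
  intro i hi
  by_contra hlt
  simp only [Set.mem_Iio, not_lt] at hlt
  exact hi (F_antitone F hdec hlt (h i))

lemma isClosed_F (hopen : ∀ n, IsOpen ((F n : Set A))) (n : ℕ) :
    IsClosed ((F n : Set A)) :=
  AddSubgroup.isClosed_of_isOpen (F n).toAddSubgroup (hopen n)

lemma tsum_mem_F {ι : Type*} (hopen : ∀ n, IsOpen ((F n : Set A)))
    (u : ι → A) (hu : Summable u) (N : ℕ) (h : ∀ i, u i ∈ F N) :
    (∑' i, u i) ∈ F N := by
  refine (isClosed_F F hopen N).mem_of_tendsto hu.hasSum (Filter.Eventually.of_forall ?_)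
  exact fun s => Submodule.sum_mem _ fun i _ => h i

lemma eq_zero_of_mem_all
    (hbasis : ∀ U ∈ nhds (0 : A), ∃ n, ((F n : Set A)) ⊆ U)
    (x : A) (h : ∀ n, x ∈ F n) : x = 0 := by
  by_contra hx
  obtain ⟨N, hN⟩ := hbasis {x}ᶜ (by
    refine IsOpen.mem_nhds isOpen_compl_singleton ?_
    simpa using fun h0 => hx h0.symm)
  exact hN (h N) rfl

lemma continuous_P
    (hbasis : ∀ U ∈ nhds (0 : A), ∃ n, ((F n : Set A)) ⊆ U)
    (hopen : ∀ n, IsOpen ((F n : Set A)))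
    (P : A →ₗ[K] A) (hP : ∀ n, ∀ x ∈ F n, P x ∈ F n) : Continuous P := by
  refine continuous_of_continuousAt_zero P ?_
  rw [ContinuousAt, map_zero, Filter.tendsto_def]
  intro U hU
  obtain ⟨N, hN⟩ := hbasis U hU
  refine Filter.mem_of_superset (IsOpen.mem_nhds (hopen N) (Submodule.zero_mem _)) ?_
  exact fun x hx => hN (hP N x hx)

lemma P_map_tsum {ι : Type*}
    (hbasis : ∀ U ∈ nhds (0 : A), ∃ n, ((F n : Set A)) ⊆ U)
    (hopen : ∀ n, IsOpen ((F n : Set A)))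
    (P : A →ₗ[K] A) (hP : ∀ n, ∀ x ∈ F n, P x ∈ F n)
    (u : ι → A) (hu : Summable u) : P (∑' i, u i) = ∑' i, P (u i) :=
  ((hu.hasSum.map P.toAddMonoidHom (continuous_P F hbasis hopen P hP)).tsum_eq).symm

/-! #### Coefficientwise operator on power series -/

end SpitzerAux

section SpitzerPS

set_option linter.unusedSectionVars false
set_option linter.unusedVariables false

open PowerSeries Finset

noncomputable def Phat (P : A →ₗ[K] A) (f : PowerSeries A) : PowerSeries A :=
  PowerSeries.mk fun n => P (coeff n f)

@[simp] lemma coeff_Phat (P : A →ₗ[K] A) (f : PowerSeries A) (n : ℕ) :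
    coeff n (Phat P f) = P (coeff n f) := coeff_mk n _

lemma Phat_add (P : A →ₗ[K] A) (f g : PowerSeries A) :
    Phat P (f + g) = Phat P f + Phat P g := by
  ext n; simp

lemma Phat_neg (P : A →ₗ[K] A) (f : PowerSeries A) : Phat P (-f) = -(Phat P f) := by
  ext n; simp

lemma Phat_sub (P : A →ₗ[K] A) (f g : PowerSeries A) :
    Phat P (f - g) = Phat P f - Phat P g := by
  ext n; simp

lemma Phat_derivative (P : A →ₗ[K] A) (f : PowerSeries A) :
    PowerSeries.derivative A (Phat P f) = Phat P (PowerSeries.derivative A f) := by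
  ext n
  rw [coeff_derivative, coeff_Phat, coeff_Phat, coeff_derivative]
  have hc : ((n : A) + 1) = ((n + 1 : ℕ) : A) := by push_cast; ring
  rw [hc, mul_comm, ← nsmul_eq_mul, ← map_nsmul, nsmul_eq_mul, mul_comm]

lemma Phat_RB (P : A →ₗ[K] A)
    (hRB : ∀ x y : A, P x * P y + P (x * y) = P (x * P y) + P (P x * y))
    (f g : PowerSeries A) :
    Phat P f * Phat P g + Phat P (f * g)
      = Phat P (f * Phat P g) + Phat P (Phat P f * g) := by
  ext n
  simp only [map_add, coeff_Phat, PowerSeries.coeff_mul, map_sum, coeff_Phat]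
  rw [← Finset.sum_add_distrib, ← Finset.sum_add_distrib]
  exact Finset.sum_congr rfl fun p _ => hRB _ _

/-! #### The geometric and logarithmic series of `1 + X * C b` -/

noncomputable def Gser (b : A) : PowerSeries A := PowerSeries.mk fun n => (-b) ^ n

lemma Gser_inv (b : A) : (1 + X * C b) * Gser b = 1 := by
  ext n
  cases n with
  | zero =>
    simp [Gser, PowerSeries.coeff_zero_eq_constantCoeff, map_mul, map_add]
  | succ n =>
    rw [add_mul, map_add, one_mul, mul_assoc, coeff_succ_X_mul, coeff_C_mul,
      PowerSeries.coeff_one]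
    simp only [Gser, coeff_mk, Nat.succ_ne_zero, if_false]
    ring

noncomputable def Lser (K : Type*) [Field K] [CharZero K] {A : Type*} [CommRing A] [Algebra K A]
    (b : A) : PowerSeries A :=
  PowerSeries.mk fun m => match m with
    | 0 => 0
    | n + 1 => (((-1 : K) ^ n) * ((n : K) + 1)⁻¹) • b ^ (n + 1)

lemma coeff_Lser_zero (b : A) : coeff 0 (Lser K b) = 0 := coeff_mk 0 _

lemma coeff_Lser_succ (b : A) (n : ℕ) :
    coeff (n + 1) (Lser K b) = (((-1 : K) ^ n) * ((n : K) + 1)⁻¹) • b ^ (n + 1) :=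
  coeff_mk (n + 1) _

lemma derivative_Lser (b : A) :
    PowerSeries.derivative A (Lser K b) = C b * Gser b := by
  ext n
  rw [coeff_derivative, coeff_Lser_succ, coeff_C_mul]
  simp only [Gser, coeff_mk]
  have hc : ((n : A) + 1) = algebraMap K A ((n : K) + 1) := by push_cast; simp
  have hn : ((n : K) + 1) ≠ 0 := by
    have := Nat.cast_add_one_ne_zero (R := K) n
    simpa using this
  rw [hc, mul_comm, ← Algebra.smul_def, smul_smul]
  have hsc : ((n:K)+1) * ((-1:K)^n * ((n:K)+1)⁻¹) = (-1:K)^n := by field_simp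
  rw [hsc, neg_pow b n, Algebra.smul_def]
  simp only [map_pow, map_neg, map_one, pow_succ]
  ring

/-! #### The formal exponential -/

noncomputable def Eser (K : Type*) [Field K] [CharZero K] {A : Type*} [CommRing A] [Algebra K A]
    (Y : PowerSeries A) : PowerSeries A :=
  PowerSeries.mk fun m => ∑ n ∈ Finset.range (m + 1), ((n.factorial : K)⁻¹) • coeff m (Y ^ n)

lemma coeff_Eser (Y : PowerSeries A) (m : ℕ) :
    coeff m (Eser K Y) = ∑ n ∈ Finset.range (m + 1), ((n.factorial : K)⁻¹) • coeff m (Y ^ n) :=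
  coeff_mk m _

lemma coeff_pow_eq_zero {Y : PowerSeries A} (hY : constantCoeff Y = 0)
    {m n : ℕ} (h : m < n) : coeff m (Y ^ n) = 0 :=
  X_pow_dvd_iff.mp (pow_dvd_pow_of_dvd (X_dvd_iff.mpr hY) n) m h

lemma coeff_Eser_ext {Y : PowerSeries A} (hY : constantCoeff Y = 0) {m M : ℕ} (hM : m < M) :
    coeff m (Eser K Y) = ∑ n ∈ Finset.range M, ((n.factorial : K)⁻¹) • coeff m (Y ^ n) := by
  rw [coeff_Eser]
  refine Finset.sum_subset (Finset.range_subset_range.mpr hM) fun n hn hn' => ?_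
  rw [Finset.mem_range, not_lt] at hn'
  rw [coeff_pow_eq_zero hY (lt_of_lt_of_le (Nat.lt_of_succ_le hn') (le_refl _)), smul_zero]

lemma constantCoeff_Eser (Y : PowerSeries A) : constantCoeff (Eser K Y) = 1 := by
  have := coeff_Eser (K := K) Y 0
  rw [PowerSeries.coeff_zero_eq_constantCoeff] at this
  simpa using this

lemma derivative_Eser {Y : PowerSeries A} (hY : constantCoeff Y = 0) :
    PowerSeries.derivative A (Eser K Y) = PowerSeries.derivative A Y * Eser K Y := by
  ext m
  have hR : coeff m (PowerSeries.derivative A Y * Eser K Y)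
      = ∑ n ∈ Finset.range (m+1), ((n.factorial : K)⁻¹) •
          coeff m (Y ^ n * PowerSeries.derivative A Y) := by
    rw [PowerSeries.coeff_mul]
    have hE : ∀ p : ℕ × ℕ, p ∈ antidiagonal m →
        coeff p.1 (PowerSeries.derivative A Y) * coeff p.2 (Eser K Y)
          = ∑ n ∈ Finset.range (m+1), ((n.factorial : K)⁻¹) •
              (coeff p.1 (PowerSeries.derivative A Y) * coeff p.2 (Y ^ n)) := by
      intro p hp
      rw [coeff_Eser_ext (K := K) hY (Nat.lt_succ_of_le (Finset.HasAntidiagonal.antidiagonal.snd_le hp))]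
      rw [Finset.mul_sum]
      exact Finset.sum_congr rfl fun n _ => (mul_smul_comm _ _ _)
    rw [Finset.sum_congr rfl hE, Finset.sum_comm]
    refine Finset.sum_congr rfl fun n _ => ?_
    rw [← Finset.smul_sum]
    congr 1
    rw [← PowerSeries.coeff_mul, mul_comm]
  rw [hR, coeff_derivative, coeff_Eser_ext (K := K) hY (Nat.lt_succ_self (m+1)),
    Finset.sum_mul]
  have hstep : ∀ n ∈ Finset.range (m + 2),
      ((n.factorial : K)⁻¹) • coeff (m+1) (Y ^ n) * ((m : A) + 1)
        = ((n.factorial : K)⁻¹) • coeff m (PowerSeries.derivative A (Y ^ n)) := by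
    intro n _
    rw [smul_mul_assoc, coeff_derivative]
  rw [Finset.sum_congr rfl hstep, Finset.sum_range_succ' _ (m+1)]
  have hzero : ((Nat.factorial 0 : K)⁻¹) • coeff m (PowerSeries.derivative A (Y ^ 0)) = 0 := by
    simp
  rw [hzero, add_zero]
  refine Finset.sum_congr rfl fun k _ => ?_
  rw [Derivation.leibniz_pow]
  simp only [Nat.add_sub_cancel]
  rw [smul_eq_mul, map_nsmul, ← Nat.cast_smul_eq_nsmul K, smul_smul]
  congr 1
  have h1 : ((k+1 : ℕ) : K) ≠ 0 := Nat.cast_ne_zero.mpr (Nat.succ_ne_zero k)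
  have h2 : ((k.factorial : K)) ≠ 0 := Nat.cast_ne_zero.mpr k.factorial_ne_zero
  rw [Nat.factorial_succ]
  push_cast
  push_cast at h1
  field_simp

/-! #### Uniqueness for a formal linear ODE -/

lemma ode_unique (P : A →ₗ[K] A) (u v Ds : PowerSeries A)
    (h0 : constantCoeff Ds = 0)
    (hode : PowerSeries.derivative A Ds = Phat P (u * Ds) + v * Ds) : Ds = 0 := by
  have H : ∀ n, coeff n Ds = 0 := by
    intro n
    induction n using Nat.strong_induction_on with
    | _ n ih =>
      match n with
      | 0 => simpa [PowerSeries.coeff_zero_eq_constantCoeff] using h0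
      | Nat.succ n =>
        have hzero : ∀ p : ℕ × ℕ, p ∈ antidiagonal n → p.2 < n + 1 := fun p hp =>
          lt_of_le_of_lt (Finset.HasAntidiagonal.antidiagonal.snd_le hp) (Nat.lt_succ_self n)
        have h2 : coeff n (Phat P (u * Ds) + v * Ds) = 0 := by
          rw [map_add, coeff_Phat, PowerSeries.coeff_mul, PowerSeries.coeff_mul]
          have e1 : ∀ p : ℕ × ℕ, p ∈ antidiagonal n →
              coeff p.1 u * coeff p.2 Ds = 0 := fun p hp => by
            rw [ih p.2 (hzero p hp), mul_zero]
          have e2 : ∀ p : ℕ × ℕ, p ∈ antidiagonal n →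
              coeff p.1 v * coeff p.2 Ds = 0 := fun p hp => by
            rw [ih p.2 (hzero p hp), mul_zero]
          rw [Finset.sum_congr rfl e1, Finset.sum_congr rfl e2]
          simp
        rw [← hode, coeff_derivative] at h2
        have hc : ((n : A) + 1) = algebraMap K A ((n : K) + 1) := by push_cast; simp
        rw [hc, mul_comm, ← Algebra.smul_def] at h2
        have hn : ((n : K) + 1) ≠ 0 := by
          have := Nat.cast_add_one_ne_zero (R := K) n
          simpa using this
        have := congrArg (fun z => ((n : K) + 1)⁻¹ • z) h2
        simpa [smul_smul, inv_mul_cancel₀ hn] using this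
  ext n
  simp [H n]

/-! #### The formal Spitzer identity -/

lemma Xser_eq (P : A →ₗ[K] A)
    (hRB : ∀ x y : A, P x * P y + P (x * y) = P (x * P y) + P (P x * y)) (b : A) :
    Eser K (-(Phat P (Lser K b)))
      = 1 - Phat P (Eser K (-(Phat P (Lser K b))) * (X * C b)) := by
  set q : PowerSeries A := C b * Gser b with hq
  set Y : PowerSeries A := -(Phat P (Lser K b)) with hYdef
  have hY0 : constantCoeff Y = 0 := by
    rw [hYdef, map_neg, neg_eq_zero, ← PowerSeries.coeff_zero_eq_constantCoeff,
      coeff_Phat, coeff_Lser_zero, map_zero]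
  set Xs : PowerSeries A := Eser K Y with hXdef
  have hdY : PowerSeries.derivative A Y = -(Phat P q) := by
    rw [hYdef, map_neg, Phat_derivative, derivative_Lser, hq]
  have hdX : PowerSeries.derivative A Xs = -(Phat P q) * Xs := by
    rw [hXdef, derivative_Eser hY0, hdY]
  set W : PowerSeries A := Xs * (X * C b) with hW
  set R : PowerSeries A := Phat P W with hR
  set Ds : PowerSeries A := R - 1 + Xs with hDs
  have hG : (1 : PowerSeries A) - X * C b * Gser b = Gser b := by
    linear_combination -Gser_inv b
  have hdXC : PowerSeries.derivative A (X * (C b : PowerSeries A)) = C b := by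
    rw [Derivation.leibniz]
    simp [smul_eq_mul]
  have hdW : PowerSeries.derivative A W = Xs * C b - Phat P q * W := by
    rw [hW, Derivation.leibniz, hdXC, hdX]
    simp only [smul_eq_mul]
    ring
  have harg : Xs * C b - q * W = q * Xs := by
    rw [hq, hW]
    linear_combination (Xs * C b) * hG
  have hqW : Phat P (Xs * C b) - Phat P (q * W) = Phat P (q * Xs) := by
    rw [← Phat_sub, harg]
  have hRB' := Phat_RB P hRB q W
  have hdR : PowerSeries.derivative A R
      = Phat P (q * Xs) - Phat P q * R + Phat P (q * R) := by
    rw [hR, Phat_derivative, hdW, Phat_sub]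
    linear_combination hqW + hRB' + (Phat P q) * hR
  have hexp : Phat P (q * Ds) = (Phat P (q * R) - Phat P q) + Phat P (q * Xs) := by
    have h1 : q * Ds = (q * R - q) + q * Xs := by rw [hDs]; ring
    rw [h1, Phat_add, Phat_sub]
  have hdDs : PowerSeries.derivative A Ds = Phat P (q * Ds) + (-(Phat P q)) * Ds := by
    have hsplit : PowerSeries.derivative A Ds
        = PowerSeries.derivative A R + PowerSeries.derivative A Xs := by
      rw [hDs, map_add, map_sub, Derivation.map_one_eq_zero, sub_zero]
    rw [hsplit, hdR, hdX, hexp, hDs]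
    ring
  have h0 : constantCoeff Ds = 0 := by
    have hc1 : constantCoeff R = 0 := by
      rw [hR, ← PowerSeries.coeff_zero_eq_constantCoeff, coeff_Phat, hW]
      rw [PowerSeries.coeff_zero_eq_constantCoeff]
      simp
    have hc2 : constantCoeff Xs = 1 := by rw [hXdef]; exact constantCoeff_Eser Y
    rw [hDs, map_add, map_sub, hc1, hc2, map_one]
    ring
  have hDzero : Ds = 0 := ode_unique P q (-(Phat P q)) Ds h0 hdDs
  have hfin : R - 1 + Xs = 0 := by rw [← hDs]; exact hDzero
  linear_combination hfin

end SpitzerPS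



section SpitzerMain

set_option linter.unusedSectionVars false
set_option linter.unusedVariables false

open PowerSeries Finset

lemma neg_one_pow_mul_eq_smul (n : ℕ) (z : A) :
    ((-1 : A)) ^ n * z = ((-1 : K) ^ n) • z := by
  rw [Algebra.smul_def]
  simp

lemma coeff_Eser_spitzer (P : A →ₗ[K] A)
    (hRB : ∀ x y : A, P x * P y + P (x * y) = P (x * P y) + P (P x * y)) (b : A) :
    ∀ n, coeff n (Eser K (-(Phat P (Lser K b)))) = ((-1 : A)) ^ n * spitzerTerm (⇑P) b n := by
  have hXeq := Xser_eq P hRB b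
  set Xs : PowerSeries A := Eser K (-(Phat P (Lser K b))) with hXs
  have hsucc : ∀ n, coeff (n+1) Xs = -(P (coeff n Xs * b)) := by
    intro n
    conv_lhs => rw [hXeq]
    rw [map_sub, coeff_Phat]
    have h1 : coeff (n+1) (1 : PowerSeries A) = 0 := by
      simp [PowerSeries.coeff_one]
    have h2 : Xs * (X * C b) = X * (C b * Xs) := by ring
    rw [h1, h2, coeff_succ_X_mul, coeff_C_mul, zero_sub, mul_comm]
  intro n
  induction n with
  | zero =>
    rw [PowerSeries.coeff_zero_eq_constantCoeff]
    have h := constantCoeff_Eser (K := K) (-(Phat P (Lser K b)))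
    rw [← hXs] at h
    rw [h]
    simp [spitzerTerm]
  | succ n ih =>
    rw [hsucc n, ih]
    have hs : spitzerTerm (⇑P) b (n+1) = P (spitzerTerm (⇑P) b n * b) := rfl
    rw [hs, mul_assoc, neg_one_pow_mul_eq_smul (K := K) n, map_smul,
      neg_one_pow_mul_eq_smul (K := K) (n+1)]
    simp [pow_succ, mul_smul]

variable (F : ℕ → Submodule K A)

lemma pow_mem_F (hF0 : F 0 = ⊤)
    (hmul : ∀ m n : ℕ, ∀ x ∈ F m, ∀ y ∈ F n, x * y ∈ F (m + n))
    (b : A) (hb : b ∈ F 1) : ∀ n, b ^ n ∈ F n := by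
  intro n
  induction n with
  | zero => rw [pow_zero]; rw [hF0]; trivial
  | succ n ih =>
    rw [pow_succ]
    exact hmul n 1 _ ih b hb

lemma spitzerTerm_mem_F (hF0 : F 0 = ⊤)
    (hmul : ∀ m n : ℕ, ∀ x ∈ F m, ∀ y ∈ F n, x * y ∈ F (m + n))
    (P : A →ₗ[K] A) (hP : ∀ n, ∀ x ∈ F n, P x ∈ F n)
    (b : A) (hb : b ∈ F 1) : ∀ n, spitzerTerm (⇑P) b n ∈ F n := by
  intro n
  induction n with
  | zero =>
    show (1 : A) ∈ F 0
    rw [hF0]; trivial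
  | succ n ih =>
    show P (spitzerTerm (⇑P) b n * b) ∈ F (n+1)
    exact hP (n+1) _ (hmul n 1 _ ih b hb)

lemma coeff_mul_mem_F
    (hmul : ∀ m n : ℕ, ∀ x ∈ F m, ∀ y ∈ F n, x * y ∈ F (m + n))
    (f g : PowerSeries A) (hf : ∀ n, coeff n f ∈ F n) (hg : ∀ n, coeff n g ∈ F n)
    (n : ℕ) : coeff n (f * g) ∈ F n := by
  rw [PowerSeries.coeff_mul]
  refine Submodule.sum_mem _ fun p hp => ?_
  have h := hmul p.1 p.2 _ (hf p.1) _ (hg p.2)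
  rwa [Finset.HasAntidiagonal.mem_antidiagonal.mp hp] at h

lemma coeff_pow_mem_F (hF0 : F 0 = ⊤)
    (hmul : ∀ m n : ℕ, ∀ x ∈ F m, ∀ y ∈ F n, x * y ∈ F (m + n))
    (f : PowerSeries A) (hf : ∀ n, coeff n f ∈ F n) :
    ∀ k n, coeff n (f ^ k) ∈ F n := by
  intro k
  induction k with
  | zero =>
    intro n
    rw [pow_zero, PowerSeries.coeff_one]
    split_ifs with h
    · subst h; rw [hF0]; trivial
    · exact Submodule.zero_mem _
  | succ k ih =>
    intro n
    rw [pow_succ]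
    exact coeff_mul_mem_F F hmul _ _ ih hf n

lemma tsum_coeff_mul (hdec : ∀ n, F (n + 1) ≤ F n)
    (hbasis : ∀ U ∈ nhds (0 : A), ∃ n, ((F n : Set A)) ⊆ U)
    (hmul : ∀ m n : ℕ, ∀ x ∈ F m, ∀ y ∈ F n, x * y ∈ F (m + n))
    (f g : PowerSeries A) (hf : ∀ n, coeff n f ∈ F n) (hg : ∀ n, coeff n g ∈ F n) :
    (∑' n, coeff n f) * (∑' n, coeff n g) = ∑' n, coeff n (f * g) := by
  have hsf := summable_of_mem_F F hdec hbasis _ hf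
  have hsg := summable_of_mem_F F hdec hbasis _ hg
  have hfg : Summable (fun p : ℕ × ℕ => coeff p.1 f * coeff p.2 g) := by
    refine summable_of_finite_notMem F hbasis _ fun N =>
      Set.Finite.subset ((Set.finite_Iio N).prod (Set.finite_Iio N)) ?_
    intro p hp
    by_contra hcon
    simp only [Set.mem_prod, Set.mem_Iio, not_and_or, not_lt] at hcon
    have hmem : coeff p.1 f * coeff p.2 g ∈ F (p.1 + p.2) := hmul _ _ _ (hf _) _ (hg _)
    have hle : F (p.1 + p.2) ≤ F N := F_antitone F hdec (by omega)
    exact hp (hle hmem)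
  rw [Summable.tsum_mul_tsum_eq_tsum_sum_antidiagonal hsf hsg hfg]
  exact tsum_congr fun n => (PowerSeries.coeff_mul n f g).symm

end SpitzerMain


open PowerSeries Finset in
set_option maxHeartbeats 2000000 in
theorem stmt18 (F : ℕ → Submodule K A) (hF : IsCompleteFiltration K F)
    (P : A →ₗ[K] A) (hP : ∀ n, ∀ x ∈ F n, P x ∈ F n)
    (hRB : ∀ x y : A, P x * P y + P (x * y) = P (x * P y) + P (P x * y))
    (b : A) (hb : b ∈ F 1) :
    expS K (-(P (logS K (1 + b)))) = 1 - P (expS K (-(P (logS K (1 + b)))) * b) ∧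
    (∀ x' : A, x' = 1 - P (x' * b) → x' = expS K (-(P (logS K (1 + b))))) ∧
    expS K (-(P (logS K (1 + b)))) = ∑' n : ℕ, ((-1 : A) ^ n) * spitzerTerm (⇑P) b n := by
  obtain ⟨hF0, hdec, hmul, hopen, hbasis⟩ := hF
  set Yser : PowerSeries A := -(Phat P (Lser K b)) with hYdef
  have hY0 : constantCoeff Yser = 0 := by
    rw [hYdef, map_neg, neg_eq_zero, ← PowerSeries.coeff_zero_eq_constantCoeff,
      coeff_Phat, coeff_Lser_zero, map_zero]
  -- coefficient memberships
  have hLmem : ∀ n, coeff n (Lser K b) ∈ F n := by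
    intro n
    match n with
    | 0 => rw [coeff_Lser_zero]; exact Submodule.zero_mem _
    | Nat.succ n =>
      rw [coeff_Lser_succ]
      exact Submodule.smul_mem _ _ (pow_mem_F F hF0 hmul b hb (n+1))
  have hYmem : ∀ n, coeff n Yser ∈ F n := by
    intro n
    rw [hYdef, map_neg, coeff_Phat]
    exact Submodule.neg_mem _ (hP n _ (hLmem n))
  have hYnmem : ∀ k n, coeff n (Yser ^ k) ∈ F n :=
    coeff_pow_mem_F F hF0 hmul _ hYmem
  have hx : ∀ n, coeff n (Eser K Yser) = ((-1 : A)) ^ n * spitzerTerm (⇑P) b n :=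
    coeff_Eser_spitzer P hRB b
  have hsmem : ∀ n, spitzerTerm (⇑P) b n ∈ F n := spitzerTerm_mem_F F hF0 hmul P hP b hb
  have hxmem : ∀ n, coeff n (Eser K Yser) ∈ F n := by
    intro n
    rw [hx n, neg_one_pow_mul_eq_smul (K := K)]
    exact Submodule.smul_mem _ _ (hsmem n)
  have hXsum : Summable (fun n => coeff n (Eser K Yser)) :=
    summable_of_mem_F F hdec hbasis _ hxmem
  have hLsum : Summable (fun n => coeff n (Lser K b)) :=
    summable_of_mem_F F hdec hbasis _ hLmem
  have hYsum : Summable (fun n => coeff n Yser) :=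
    summable_of_mem_F F hdec hbasis _ hYmem
  -- step (i): the logarithm
  have hlog : logS K (1 + b) = ∑' n, coeff n (Lser K b) := by
    simp only [logS]
    have h1 : (1 : A) + b - 1 = b := by ring
    rw [h1]
    conv_rhs => rw [Summable.tsum_eq_zero_add hLsum]
    rw [coeff_Lser_zero, zero_add]
    exact tsum_congr fun n => (coeff_Lser_succ b n).symm
  -- step (ii)
  have ha : -(P (logS K (1 + b))) = ∑' n, coeff n Yser := by
    rw [hlog, P_map_tsum F hbasis hopen P hP _ hLsum, ← tsum_neg]
    refine tsum_congr fun n => ?_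
    rw [hYdef, map_neg, coeff_Phat]
  -- step (iii): powers
  have hpow : ∀ k, (∑' n, coeff n Yser) ^ k = ∑' n, coeff n (Yser ^ k) := by
    intro k
    induction k with
    | zero =>
      rw [pow_zero]
      have hcoe : ∀ n, coeff n ((Yser) ^ 0) = if n = 0 then (1:A) else 0 := by
        intro n; rw [pow_zero, PowerSeries.coeff_one]
      rw [tsum_congr hcoe, tsum_eq_single 0 (fun n hn => if_neg hn)]
      simp
    | succ k ih =>
      rw [pow_succ, ih,
        tsum_coeff_mul F hdec hbasis hmul _ _ (fun n => hYnmem k n) hYmem, ← pow_succ]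
  -- step (iv): the exponential as evaluation of `Eser`
  have hkey : expS K (-(P (logS K (1 + b)))) = ∑' n, coeff n (Eser K Yser) := by
    simp only [expS]
    rw [ha]
    have h1 : ∀ n : ℕ, ((n.factorial : K)⁻¹) • (∑' m, coeff m Yser) ^ n
        = ∑' m, ((n.factorial : K)⁻¹) • coeff m (Yser ^ n) := by
      intro n
      rw [hpow n, Algebra.smul_def, ← (summable_of_mem_F F hdec hbasis _
        (hYnmem n)).tsum_mul_left (algebraMap K A ((n.factorial : K)⁻¹))]
      exact tsum_congr fun m => (Algebra.smul_def _ _).symm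
    rw [tsum_congr h1]
    set u : ℕ × ℕ → A := fun p => ((p.1.factorial : K)⁻¹) • coeff p.2 (Yser ^ p.1) with hu
    have humem : ∀ p : ℕ × ℕ, u p ∈ F p.2 := fun p =>
      Submodule.smul_mem _ _ (hYnmem p.1 p.2)
    have hu0 : ∀ p : ℕ × ℕ, p.2 < p.1 → u p = 0 := fun p hp => by
      rw [hu]
      simp only
      rw [coeff_pow_eq_zero hY0 hp, smul_zero]
    have husum : Summable u := by
      refine summable_of_finite_notMem F hbasis u fun N =>
        Set.Finite.subset ((Set.finite_Iio N).prod (Set.finite_Iio N)) ?_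
      intro p hp
      by_contra hcon
      simp only [Set.mem_prod, Set.mem_Iio, not_and_or, not_lt] at hcon
      rcases hcon with h1' | h2'
      · rcases lt_or_ge p.2 N with hN2 | hN2
        · exact hp (by rw [hu0 p (lt_of_lt_of_le hN2 h1')]; exact Submodule.zero_mem _)
        · exact hp (F_antitone F hdec hN2 (humem p))
      · exact hp (F_antitone F hdec h2' (humem p))
    have hrows : ∀ n, Summable fun m => u (n, m) := fun n =>
      summable_of_mem_F F hdec hbasis _ (fun m => humem (n, m))
    have hcols : ∀ m, Summable fun n => u (n, m) := fun m =>
      summable_of_ne_finset_zero (s := Finset.range (m+1)) (fun n hn =>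
        hu0 (n, m) (by simpa using hn))
    have hswap : ∑' n, ∑' m, u (n, m) = ∑' m, ∑' n, u (n, m) :=
      (Summable.tsum_comm' (f := fun n m => u (n, m)) husum hrows hcols).symm
    have hinner : ∀ m, ∑' n, u (n, m) = coeff m (Eser K Yser) := by
      intro m
      rw [tsum_eq_sum (s := Finset.range (m+1)) (fun n hn => hu0 (n, m) (by simpa using hn))]
      rw [coeff_Eser]
    calc ∑' n, ∑' m, u (n, m) = ∑' m, ∑' n, u (n, m) := hswap
      _ = ∑' m, coeff m (Eser K Yser) := tsum_congr hinner
  -- part 3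
  have hpart3 : expS K (-(P (logS K (1 + b))))
      = ∑' n, ((-1 : A)) ^ n * spitzerTerm (⇑P) b n := by
    rw [hkey]
    exact tsum_congr fun n => hx n
  -- part 1
  set xf : ℕ → A := fun n => ((-1 : A)) ^ n * spitzerTerm (⇑P) b n with hxf
  have hxfmem : ∀ n, xf n ∈ F n := fun n => by
    rw [hxf]; simp only; rw [← hx n]; exact hxmem n
  have hxfsum : Summable xf := summable_of_mem_F F hdec hbasis _ hxfmem
  have hrec : ∀ n, xf (n+1) = -(P (xf n * b)) := by
    intro n
    rw [hxf]
    simp only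
    have hs : spitzerTerm (⇑P) b (n+1) = P (spitzerTerm (⇑P) b n * b) := rfl
    rw [hs, mul_assoc, neg_one_pow_mul_eq_smul (K := K) n, map_smul,
      neg_one_pow_mul_eq_smul (K := K) (n+1)]
    simp [pow_succ, mul_smul]
  have hfix : (∑' n, xf n) = 1 - P ((∑' n, xf n) * b) := by
    have hsb : Summable (fun n => xf n * b) := by
      refine summable_of_mem_F F hdec hbasis _ fun n => ?_
      exact hdec n (hmul n 1 _ (hxfmem n) b hb)
    have h1 : (∑' n, xf n) * b = ∑' n, xf n * b := (hxfsum.tsum_mul_right b).symm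
    have h2 : P (∑' n, xf n * b) = ∑' n, P (xf n * b) :=
      P_map_tsum F hbasis hopen P hP _ hsb
    have h3 : ∀ n, P (xf n * b) = -(xf (n+1)) := fun n => by rw [hrec n, neg_neg]
    have h4 : ∑' n, P (xf n * b) = -(∑' n, xf (n+1)) := by
      rw [tsum_congr h3, tsum_neg]
    have h5 : ∑' n, xf (n+1) = (∑' n, xf n) - 1 := by
      have h6 := Summable.tsum_eq_zero_add hxfsum
      have h0 : xf 0 = 1 := by rw [hxf]; simp [spitzerTerm]
      rw [h0] at h6
      rw [eq_sub_iff_add_eq, add_comm]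
      exact h6.symm
    rw [h1, h2, h4, h5]
    ring
  have hpart1 : expS K (-(P (logS K (1 + b))))
      = 1 - P (expS K (-(P (logS K (1 + b)))) * b) := by
    rw [hpart3]
    exact hfix
  refine ⟨hpart1, ?_, hpart3⟩
  intro x' hx'
  set e : A := expS K (-(P (logS K (1 + b)))) with he
  set d : A := x' - e with hd
  have hdrec : d = -(P (d * b)) := by
    have h1 : P (d * b) = P (x' * b) - P (e * b) := by
      rw [hd, sub_mul, map_sub]
    have h3 : e = 1 - P (e * b) := by rw [he]; exact hpart1
    rw [h1, hd]
    linear_combination hx' - h3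
  have hdmem : ∀ n, d ∈ F n := by
    intro n
    induction n with
    | zero => rw [hF0]; trivial
    | succ n ih =>
      rw [hdrec]
      exact Submodule.neg_mem _ (hP (n+1) _ (hmul n 1 d ih b hb))
  have hd0 : d = 0 := eq_zero_of_mem_all F hbasis d hdmem
  have := sub_eq_zero.mp (hd ▸ hd0)
  exact this
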